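/- Let n be a natural number, G = (Fin n → ZMod 2), R = AddMonoidAlgebra (ZMod 2) G, and I ⊆ R the augmentation ideal. For every natural number k, the (ZMod 2)-dimension of the quotient module I^k / I^(k+1) equals the binomial coefficient (n choose k). (Here I^0 = R.) -/

import Mathlib

open AddMonoidAlgebra

/-- The augmentation homomorphism of the group algebra of `(ZMod 2)^n` over `ZMod 2`:
the algebra homomorphism sending each basis element `[g]` to `1`. -/
noncomputable def aug (n : ℕ) :
    AddMonoidAlgebra (ZMod 2) (Fin n → ZMod 2) →ₐ[ZMod 2] ZMod 2 :=
  AddMonoidAlgebra.lift (ZMod 2) (ZMod 2) (Fin n → ZMod 2) 1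

/-- The augmentation ideal, i.e. the kernel of the augmentation homomorphism. -/
noncomputable def augIdeal (n : ℕ) : Ideal (AddMonoidAlgebra (ZMod 2) (Fin n → ZMod 2)) :=
  RingHom.ker (aug n)

section helpers
open Finset
variable {n : ℕ}

lemma addSelf {M : Type*} [AddCommMonoid M] [Module (ZMod 2) M] (r : M) : r + r = 0 := by
  have h : r + r = ((1 : ZMod 2) + 1) • r := by rw [add_smul, one_smul]
  rw [h, show (1 : ZMod 2) + 1 = 0 by decide, zero_smul]

lemma evenSmul {M : Type*} [AddCommMonoid M] [Module (ZMod 2) M] {m : ℕ} (hm : Even m)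
    (r : M) : m • r = 0 := by
  obtain ⟨j, rfl⟩ := hm
  rw [add_nsmul, addSelf]

noncomputable def xx (n : ℕ) (i : Fin n) : AddMonoidAlgebra (ZMod 2) (Fin n → ZMod 2) :=
  AddMonoidAlgebra.single (Pi.single i 1) 1 + 1

noncomputable def bb (n : ℕ) (S : Finset (Fin n)) : AddMonoidAlgebra (ZMod 2) (Fin n → ZMod 2) :=
  ∏ i ∈ S, xx n i

def indic (n : ℕ) (S : Finset (Fin n)) : Fin n → ZMod 2 := fun j => if j ∈ S then 1 else 0

lemma aug_single (g : Fin n → ZMod 2) (c : ZMod 2) :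
    aug n (AddMonoidAlgebra.single g c) = c := by
  simp [aug, AddMonoidAlgebra.lift_single]

lemma aug_apply (f : AddMonoidAlgebra (ZMod 2) (Fin n → ZMod 2)) :
    aug n f = ∑ g ∈ f.coeff.support, f.coeff g := by
  simp [aug, AddMonoidAlgebra.lift_apply, Finsupp.sum]

lemma xx_mem (i : Fin n) : xx n i ∈ augIdeal n := by
  simp only [augIdeal, RingHom.mem_ker, xx, map_add, map_one]
  rw [show ((aug n) (AddMonoidAlgebra.single (Pi.single i 1) 1) : ZMod 2)
    = 1 from aug_single _ _]
  decide

lemma prod_single_eq (S : Finset (Fin n)) :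
    ∏ i ∈ S, (AddMonoidAlgebra.single (Pi.single i (1 : ZMod 2)) (1 : ZMod 2)
        : AddMonoidAlgebra (ZMod 2) (Fin n → ZMod 2))
      = AddMonoidAlgebra.single (indic n S) 1 := by
  induction S using Finset.induction with
  | empty =>
      rw [Finset.prod_empty]
      have : indic n (∅ : Finset (Fin n)) = 0 := by funext j; simp [indic]
      rw [this, AddMonoidAlgebra.one_def]
  | @insert i S hi ih =>
      rw [Finset.prod_insert hi, ih, AddMonoidAlgebra.single_mul_single, one_mul]
      congr 1
      funext j
      by_cases hj : j = i
      · subst hj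
        simp [indic, Pi.single_apply, hi]
      · simp [indic, Pi.single_apply, hj]

lemma bb_eq_sum (S : Finset (Fin n)) :
    bb n S = ∑ T ∈ S.powerset, AddMonoidAlgebra.single (indic n T) 1 := by
  unfold bb xx
  rw [Finset.prod_add]
  refine Finset.sum_congr rfl fun T hT => ?_
  rw [Finset.prod_const_one, mul_one, prod_single_eq]

lemma xx_sq (i : Fin n) : xx n i * xx n i = 0 := by
  unfold xx
  set s : AddMonoidAlgebra (ZMod 2) (Fin n → ZMod 2) :=
    AddMonoidAlgebra.single (Pi.single i 1) 1 with hs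
  have h1 : s * s = 1 := by
    rw [hs, AddMonoidAlgebra.single_mul_single, one_mul]
    have h2 : (Pi.single i (1:ZMod 2) : Fin n → ZMod 2) + (Pi.single i (1:ZMod 2) : Fin n → ZMod 2) = 0 := by
      funext j; exact addSelf _
    rw [h2, AddMonoidAlgebra.one_def]
  have h3 : (s+1)*(s+1) = s*s + (s+s) + 1*1 := by ring
  rw [h3, h1, addSelf, mul_one, add_zero, addSelf]

lemma bb_mul_of_disjoint {S T : Finset (Fin n)} (h : Disjoint S T) :
    bb n S * bb n T = bb n (S ∪ T) := by
  unfold bb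
  rw [← Finset.prod_union h]

lemma bb_mul_of_not_disjoint {S T : Finset (Fin n)} (h : ¬ Disjoint S T) :
    bb n S * bb n T = 0 := by
  rw [Finset.not_disjoint_iff] at h
  obtain ⟨i, hiS, hiT⟩ := h
  unfold bb
  rw [← Finset.mul_prod_erase _ _ hiS, ← Finset.mul_prod_erase _ _ hiT,
    mul_mul_mul_comm, xx_sq, zero_mul]

lemma exists_indic (g : Fin n → ZMod 2) : ∃ S, g = indic n S := by
  refine ⟨Finset.univ.filter fun i => g i = 1, ?_⟩
  have h2 : ∀ z : ZMod 2, z = 0 ∨ z = 1 := by decide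
  funext j
  rcases h2 (g j) with h | h <;> simp [indic, h]

lemma single_mem_span (S : Finset (Fin n)) :
    (AddMonoidAlgebra.single (indic n S) 1 : AddMonoidAlgebra (ZMod 2) (Fin n → ZMod 2))
      ∈ Submodule.span (ZMod 2) (Set.range (bb n)) := by
  induction S using Finset.strongInduction with
  | _ S ih =>
    have hb := bb_eq_sum (n := n) S
    have hS : S ∈ S.powerset := Finset.mem_powerset_self S
    rw [← Finset.add_sum_erase _ _ hS] at hb
    have heq : (AddMonoidAlgebra.single (indic n S) 1
          : AddMonoidAlgebra (ZMod 2) (Fin n → ZMod 2))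
        = bb n S - ∑ T ∈ S.powerset.erase S, AddMonoidAlgebra.single (indic n T) 1 := by
      rw [hb]; ring
    rw [heq]
    refine Submodule.sub_mem _ (Submodule.subset_span ⟨S, rfl⟩)
      (Submodule.sum_mem _ fun T hT => ?_)
    have hT' : T ⊂ S := by
      rw [Finset.mem_erase, Finset.mem_powerset] at hT
      exact lt_of_le_of_ne hT.2 hT.1
    exact ih T hT'

noncomputable def stdBasis (n : ℕ) :
    Module.Basis (Fin n → ZMod 2) (ZMod 2) (AddMonoidAlgebra (ZMod 2) (Fin n → ZMod 2)) :=
  AddMonoidAlgebra.basis _ _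

lemma stdBasis_apply (g : Fin n → ZMod 2) :
    stdBasis n g = AddMonoidAlgebra.single g 1 := rfl

lemma span_bb_top : Submodule.span (ZMod 2) (Set.range (bb n)) = ⊤ := by
  rw [eq_top_iff, ← (stdBasis n).span_eq, Submodule.span_le]
  rintro _ ⟨g, rfl⟩
  rw [stdBasis_apply]
  obtain ⟨S, rfl⟩ := exists_indic g
  exact single_mem_span S

instance : Module.Finite (ZMod 2) (AddMonoidAlgebra (ZMod 2) (Fin n → ZMod 2)) :=
  Module.Finite.of_basis (stdBasis n)

lemma finrank_R : Module.finrank (ZMod 2) (AddMonoidAlgebra (ZMod 2) (Fin n → ZMod 2))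
    = 2 ^ n := by
  rw [Module.finrank_eq_card_basis (stdBasis n)]
  simp

noncomputable def bbBasis (n : ℕ) :
    Module.Basis (Finset (Fin n)) (ZMod 2) (AddMonoidAlgebra (ZMod 2) (Fin n → ZMod 2)) :=
  basisOfTopLeSpanOfCardEqFinrank (bb n) (span_bb_top).ge (by simp [finrank_R])

lemma bb_linearIndependent : LinearIndependent (ZMod 2) (bb n) := by
  have := (bbBasis n).linearIndependent
  rwa [show ⇑(bbBasis n) = bb n from coe_basisOfTopLeSpanOfCardEqFinrank _ _ _] at this

/-- `[g] + 1` lies in the span of the `bb T` with `T` nonempty. -/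
lemma single_add_one_mem (S : Finset (Fin n)) :
    (AddMonoidAlgebra.single (indic n S) 1 + 1
        : AddMonoidAlgebra (ZMod 2) (Fin n → ZMod 2))
      ∈ Submodule.span (ZMod 2) (bb n '' {T | T ≠ ∅}) := by
  induction S using Finset.strongInduction with
  | _ S ih =>
    rcases eq_or_ne S ∅ with rfl | hS
    · have h0 : indic n (∅ : Finset (Fin n)) = 0 := by funext j; simp [indic]
      rw [h0, ← AddMonoidAlgebra.one_def, addSelf]
      exact Submodule.zero_mem _
    · have hb := bb_eq_sum (n := n) S
      have hSmem : S ∈ S.powerset := Finset.mem_powerset_self S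
      rw [← Finset.add_sum_erase _ _ hSmem] at hb
      set E := S.powerset.erase S with hE
      have hcard : E.card + 1 = 2 ^ S.card := by
        have h1 : E.card = S.powerset.card - 1 := Finset.card_erase_of_mem hSmem
        have h2 : S.powerset.card = 2 ^ S.card := Finset.card_powerset S
        have h3 : 1 ≤ 2 ^ S.card := Nat.one_le_two_pow
        omega
      have key : (AddMonoidAlgebra.single (indic n S) 1 + 1
            : AddMonoidAlgebra (ZMod 2) (Fin n → ZMod 2))
          = bb n S + ∑ T ∈ E, (AddMonoidAlgebra.single (indic n T) 1 + 1) := by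
        have hsum : ∑ T ∈ E, ((AddMonoidAlgebra.single (indic n T) 1 + 1)
              : AddMonoidAlgebra (ZMod 2) (Fin n → ZMod 2))
            = (∑ T ∈ E, AddMonoidAlgebra.single (indic n T) 1) + E.card • 1 := by
          rw [Finset.sum_add_distrib, Finset.sum_const]
        rw [hsum, hb]
        have hev : ((E.card + 1) : ℕ) • (1 : AddMonoidAlgebra (ZMod 2) (Fin n → ZMod 2)) = 0 := by
          apply evenSmul
          rw [hcard]
          exact (Nat.even_pow' (by
            intro h; apply hS; exact Finset.card_eq_zero.mp h)).mpr even_two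
        have hodd : E.card • (1 : AddMonoidAlgebra (ZMod 2) (Fin n → ZMod 2)) = 1 := by
          rw [succ_nsmul] at hev
          have h4 : E.card • (1 : AddMonoidAlgebra (ZMod 2) (Fin n → ZMod 2))
              = (E.card • (1 : AddMonoidAlgebra (ZMod 2) (Fin n → ZMod 2)) + 1) + 1 := by
            rw [add_assoc, addSelf, add_zero]
          rw [h4, hev, zero_add]
        rw [hodd]
        have hss := addSelf (∑ T ∈ E,
          (AddMonoidAlgebra.single (indic n T) (1 : ZMod 2)
            : AddMonoidAlgebra (ZMod 2) (Fin n → ZMod 2)))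
        linear_combination -hss
      rw [key]
      refine Submodule.add_mem _ (Submodule.subset_span ⟨S, hS, rfl⟩)
        (Submodule.sum_mem _ fun T hT => ?_)
      have hT' : T ⊂ S := by
        rw [hE, Finset.mem_erase, Finset.mem_powerset] at hT
        exact lt_of_le_of_ne hT.2 hT.1
      exact ih T hT'

lemma augIdeal_le_span {f : AddMonoidAlgebra (ZMod 2) (Fin n → ZMod 2)}
    (hf : f ∈ augIdeal n) :
    f ∈ Submodule.span (ZMod 2)
      (Set.range fun g : Fin n → ZMod 2 =>
        (AddMonoidAlgebra.single g 1 + 1 : AddMonoidAlgebra (ZMod 2) (Fin n → ZMod 2))) := by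
  have h0 : ∑ g ∈ f.coeff.support, f.coeff g = 0 := by
    rw [← aug_apply]; exact hf
  have hrep : f = ∑ g ∈ f.coeff.support, f.coeff g • (AddMonoidAlgebra.single g 1 + 1) := by
    have h1 : ∑ g ∈ f.coeff.support, f.coeff g •
          ((AddMonoidAlgebra.single g 1 + 1) : AddMonoidAlgebra (ZMod 2) (Fin n → ZMod 2))
        = (∑ g ∈ f.coeff.support, f.coeff g • AddMonoidAlgebra.single g 1)
          + (∑ g ∈ f.coeff.support, f.coeff g) • (1 : AddMonoidAlgebra (ZMod 2) (Fin n → ZMod 2)) := by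
      rw [Finset.sum_smul]
      rw [← Finset.sum_add_distrib]
      exact Finset.sum_congr rfl fun g _ => smul_add _ _ _
    rw [h1, h0, zero_smul, add_zero]
    conv_lhs => rw [← AddMonoidAlgebra.sum_coeff_single f]
    rw [Finsupp.sum]
    exact Finset.sum_congr rfl fun g _ => by
      rw [AddMonoidAlgebra.smul_single', mul_one]
  rw [hrep]
  exact Submodule.sum_mem _ fun g _ =>
    Submodule.smul_mem _ _ (Submodule.subset_span ⟨g, rfl⟩)

lemma bb_mem_pow (S : Finset (Fin n)) : bb n S ∈ (augIdeal n) ^ S.card := by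
  induction S using Finset.induction with
  | empty => simp [bb]
  | @insert i S hi ih =>
      rw [show bb n (insert i S) = xx n i * bb n S from Finset.prod_insert hi,
        Finset.card_insert_of_notMem hi, pow_succ']
      exact Ideal.mul_mem_mul (xx_mem i) ih

/-- The span of the `bb S` with `k ≤ S.card`. -/
noncomputable def Nk (n k : ℕ) :
    Submodule (ZMod 2) (AddMonoidAlgebra (ZMod 2) (Fin n → ZMod 2)) :=
  Submodule.span (ZMod 2) (bb n '' {S | k ≤ S.card})

lemma Nk_le_pow (k : ℕ) :
    Nk n k ≤ Submodule.restrictScalars (ZMod 2) ((augIdeal n) ^ k) := by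
  rw [Nk, Submodule.span_le]
  rintro _ ⟨S, hS, rfl⟩
  exact Ideal.pow_le_pow_right hS (bb_mem_pow S)

lemma bb_mul_mem {S T : Finset (Fin n)} {k : ℕ} (hS : k ≤ S.card) (hT : T ≠ ∅) :
    bb n S * bb n T ∈ Nk n (k + 1) := by
  by_cases hd : Disjoint S T
  · rw [bb_mul_of_disjoint hd]
    apply Submodule.subset_span
    refine ⟨S ∪ T, ?_, rfl⟩
    have h1 : 1 ≤ T.card := Finset.card_pos.mpr (Finset.nonempty_iff_ne_empty.mpr hT)
    have h2 : (S ∪ T).card = S.card + T.card := Finset.card_union_of_disjoint hd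
    simp only [Set.mem_setOf_eq]
    omega
  · rw [bb_mul_of_not_disjoint hd]
    exact Submodule.zero_mem _

lemma mul_mem_Nk_succ {k : ℕ} {S : Finset (Fin n)} (hS : k ≤ S.card) (g : Fin n → ZMod 2) :
    bb n S * (AddMonoidAlgebra.single g 1 + 1) ∈ Nk n (k + 1) := by
  obtain ⟨S', rfl⟩ := exists_indic g
  have hsp := single_add_one_mem (n := n) S'
  generalize (AddMonoidAlgebra.single (indic n S') 1 + 1
    : AddMonoidAlgebra (ZMod 2) (Fin n → ZMod 2)) = c at hsp ⊢
  induction hsp using Submodule.span_induction with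
  | zero => rw [mul_zero]; exact Submodule.zero_mem _
  | add x y _ _ hx hy => rw [mul_add]; exact Submodule.add_mem _ hx hy
  | smul a x _ hx => rw [mul_smul_comm]; exact Submodule.smul_mem _ _ hx
  | mem c hcmem =>
      obtain ⟨T, hT, rfl⟩ := hcmem
      exact bb_mul_mem hS hT

lemma pow_le_Nk (k : ℕ) :
    Submodule.restrictScalars (ZMod 2) ((augIdeal n) ^ k) ≤ Nk n k := by
  induction k with
  | zero =>
      intro f _
      have hf : f ∈ Submodule.span (ZMod 2) (Set.range (bb n)) := by
        rw [span_bb_top]; trivial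
      refine Submodule.span_mono ?_ hf
      rintro _ ⟨S, rfl⟩; exact ⟨S, Nat.zero_le _, rfl⟩
  | succ k ih =>
      intro f hf
      have hf' : f ∈ (augIdeal n) ^ k * augIdeal n := by
        rw [← pow_succ]; exact hf
      refine Submodule.mul_induction_on hf' ?_ (fun x y hx hy => Submodule.add_mem _ hx hy)
      intro m hm c hc
      have hm' : m ∈ Nk n k := ih hm
      have hc' := augIdeal_le_span hc
      clear hm hc hf hf'
      induction hc' using Submodule.span_induction with
      | zero => rw [mul_zero]; exact Submodule.zero_mem _
      | add x y _ _ hx hy => rw [mul_add]; exact Submodule.add_mem _ hx hy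
      | smul a x _ hx => rw [mul_smul_comm]; exact Submodule.smul_mem _ _ hx
      | mem c hcmem =>
          obtain ⟨g, rfl⟩ := hcmem
          induction hm' using Submodule.span_induction with
          | zero => rw [zero_mul]; exact Submodule.zero_mem _
          | add x y _ _ hx hy => rw [add_mul]; exact Submodule.add_mem _ hx hy
          | smul a x _ hx => rw [smul_mul_assoc]; exact Submodule.smul_mem _ _ hx
          | mem m hmmem =>
              obtain ⟨S, hS, rfl⟩ := hmmem
              exact mul_mem_Nk_succ hS g

lemma IPow_eq_Nk (k : ℕ) :
    Submodule.restrictScalars (ZMod 2) ((augIdeal n) ^ k) = Nk n k :=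
  le_antisymm (pow_le_Nk k) (Nk_le_pow k)

lemma finrank_Nk (k : ℕ) :
    Module.finrank (ZMod 2) (Nk n k) = Fintype.card {S : Finset (Fin n) // k ≤ S.card} := by
  have hli : LinearIndependent (ZMod 2)
      (fun S : {S : Finset (Fin n) // k ≤ S.card} => bb n S.val) :=
    bb_linearIndependent.comp _ Subtype.val_injective
  have hr : Set.range (fun S : {S : Finset (Fin n) // k ≤ S.card} => bb n S.val)
      = bb n '' {S | k ≤ S.card} := by
    ext x
    constructor
    · rintro ⟨⟨S, hS⟩, rfl⟩; exact ⟨S, hS, rfl⟩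
    · rintro ⟨S, hS, rfl⟩; exact ⟨⟨S, hS⟩, rfl⟩
  rw [Nk, ← hr]
  exact (Module.finrank_eq_card_basis (Module.Basis.span hli)).symm ▸
    (Module.finrank_eq_card_basis (Module.Basis.span hli))

lemma card_step (k : ℕ) :
    Fintype.card {S : Finset (Fin n) // k ≤ S.card}
      = n.choose k + Fintype.card {S : Finset (Fin n) // k + 1 ≤ S.card} := by
  classical
  rw [Fintype.card_subtype, Fintype.card_subtype]
  have hsplit : Finset.univ.filter (fun S : Finset (Fin n) => k ≤ S.card)
      = (Finset.univ.filter fun S : Finset (Fin n) => S.card = k)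
        ∪ (Finset.univ.filter fun S : Finset (Fin n) => k + 1 ≤ S.card) := by
    ext S
    simp only [Finset.mem_filter, Finset.mem_union, Finset.mem_univ, true_and]
    omega
  rw [hsplit, Finset.card_union_of_disjoint]
  · congr 1
    rw [← Fintype.card_subtype, Fintype.card_finset_len, Fintype.card_fin]
  · rw [Finset.disjoint_left]
    intro S h1 h2
    rw [Finset.mem_filter] at h1 h2
    omega

end helpers

/-- `I ^ k`, viewed as a `ZMod 2`-submodule of the group algebra (`I ^ 0 = R`). -/
noncomputable def IPowSub (n k : ℕ) :
    Submodule (ZMod 2) (AddMonoidAlgebra (ZMod 2) (Fin n → ZMod 2)) :=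
  Submodule.restrictScalars (ZMod 2) ((augIdeal n) ^ k)

/-- `I ^ (k+1)`, viewed as a `ZMod 2`-submodule of `I ^ k`. -/
noncomputable def IPowSuccSub (n k : ℕ) : Submodule (ZMod 2) (IPowSub n k) :=
  Submodule.comap (IPowSub n k).subtype (IPowSub n (k + 1))

set_option synthInstance.maxHeartbeats 1000000 in
set_option maxHeartbeats 2000000 in
/-- The `ZMod 2`-dimension of the graded piece `I ^ k / I ^ (k+1)` is `n choose k`. -/
theorem finrank_gradedPiece (n k : ℕ) :
    Module.finrank (ZMod 2) (IPowSub n k ⧸ IPowSuccSub n k) = n.choose k := by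
  have hle : IPowSub n (k + 1) ≤ IPowSub n k := fun x hx =>
    Ideal.pow_le_pow_right (Nat.le_succ k) hx
  have h2 : Module.finrank (ZMod 2) (IPowSuccSub n k)
      = Module.finrank (ZMod 2) (IPowSub n (k + 1)) :=
    (Submodule.comapSubtypeEquivOfLe hle).finrank_eq
  have h1 := Submodule.finrank_quotient_add_finrank (IPowSuccSub n k)
  have h3 : ∀ j, Module.finrank (ZMod 2) (IPowSub n j)
      = Fintype.card {S : Finset (Fin n) // j ≤ S.card} := fun j => by
    rw [show IPowSub n j = Nk n j from IPow_eq_Nk j, finrank_Nk]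
  have h4 := card_step (n := n) k
  rw [h2, h3 k, h3 (k + 1)] at h1
  omega
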